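/- With the gluing data as in the context, let {Q_i : i ∈ I} be open subsets Q_i ⊆ O_i satisfying conditions (a), (b), (c) for all i, j ∈ I. Then for each i, j ∈ I, the image of the map Q_ij → Q_i × Q_j given by x ↦ (x, φ_ij(x)) is a closed subset of Q_i × Q_j. -/

import Mathlib

open Set Topology

/-- The model fibre `ℂⁿ`. -/
abbrev ComplexN (n : ℕ) : Type := EuclideanSpace ℂ (Fin n)

/-- Gluing data, as in Ciocan-Fontanine–Iritani: a locally compact, first-countable Hausdorff
space `M` with open covers `{Uᵢ}`, `{Vᵢ}`, `{Wᵢ}` satisfying `Uᵢ ⋐ Vᵢ ⋐ Wᵢ`, `{Vᵢ}` locally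
finite, together with open neighbourhoods `Nᵢⱼ` of `Wᵢⱼ × {0}` in `Wᵢⱼ × ℂⁿ` and homeomorphisms
`φᵢⱼ : Nᵢⱼ → Nⱼᵢ` (encoded as globally defined functions) restricting to the identity on
`Wᵢⱼ × {0}`, with `φⱼᵢ = φᵢⱼ⁻¹`, `Nᵢᵢ = Wᵢ × ℂⁿ` and `φᵢᵢ = id`. -/
structure GluingData (M : Type*) [TopologicalSpace M] (n : ℕ) (I : Type*) where
  U : I → Set M
  V : I → Set M
  W : I → Set M
  isOpen_U : ∀ i, IsOpen (U i)
  isOpen_V : ∀ i, IsOpen (V i)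
  isOpen_W : ∀ i, IsOpen (W i)
  cover_U : ⋃ i, U i = univ
  cover_V : ⋃ i, V i = univ
  cover_W : ⋃ i, W i = univ
  U_compactClosure : ∀ i, IsCompact (closure (U i))
  closure_U_subset : ∀ i, closure (U i) ⊆ V i
  V_compactClosure : ∀ i, IsCompact (closure (V i))
  closure_V_subset : ∀ i, closure (V i) ⊆ W i
  locallyFinite_V : LocallyFinite V
  N : I → I → Set (M × ComplexN n)
  isOpen_N : ∀ i j, IsOpen (N i j)
  N_subset : ∀ i j, N i j ⊆ (W i ∩ W j) ×ˢ univ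
  zeroSection_subset_N : ∀ i j, (W i ∩ W j) ×ˢ ({0} : Set (ComplexN n)) ⊆ N i j
  φ : I → I → M × ComplexN n → M × ComplexN n
  continuousOn_φ : ∀ i j, ContinuousOn (φ i j) (N i j)
  φ_image : ∀ i j, φ i j '' N i j = N j i
  φ_leftInv : ∀ i j, ∀ x ∈ N i j, φ j i (φ i j x) = x
  φ_id_zeroSection : ∀ i j, ∀ x ∈ (W i ∩ W j) ×ˢ ({0} : Set (ComplexN n)), φ i j x = x
  N_self : ∀ i, N i i = W i ×ˢ univ
  φ_self : ∀ i, ∀ x ∈ N i i, φ i i x = x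

namespace GluingData

variable {M : Type*} [TopologicalSpace M] {n : ℕ} {I : Type*} (D : GluingData M n I)

/-- `Oᵢ := Vᵢ × ℂⁿ`. -/
def O (i : I) : Set (M × ComplexN n) := D.V i ×ˢ univ

/-- `Oᵢⱼ := (Vᵢⱼ × ℂⁿ) ∩ Nᵢⱼ ∩ φᵢⱼ⁻¹(Vᵢⱼ × ℂⁿ)`. -/
def Oij (i j : I) : Set (M × ComplexN n) :=
  ((D.V i ∩ D.V j) ×ˢ univ) ∩ D.N i j ∩ D.φ i j ⁻¹' ((D.V i ∩ D.V j) ×ˢ univ)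

/-- `Qᵢⱼ := Qᵢ ∩ Oᵢⱼ ∩ φᵢⱼ⁻¹(Qⱼ)`. -/
def Qij (Q : I → Set (M × ComplexN n)) (i j : I) : Set (M × ComplexN n) :=
  Q i ∩ D.Oij i j ∩ D.φ i j ⁻¹' (Q j)

/-- Condition (a): `Qᵢ ⋐ Oᵢ`. -/
def CondA (Q : I → Set (M × ComplexN n)) : Prop :=
  ∀ i, IsCompact (closure (Q i)) ∧ closure (Q i) ⊆ D.O i

/-- Condition (b): `Uᵢ × {0} ⊆ Qᵢ ⊆ Uᵢ × ℂⁿ`. -/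
def CondB (Q : I → Set (M × ComplexN n)) : Prop :=
  ∀ i, D.U i ×ˢ ({0} : Set (ComplexN n)) ⊆ Q i ∧ Q i ⊆ D.U i ×ˢ univ

/-- Condition (c): `Qᵢⱼ ⋐ Oᵢⱼ`. -/
def CondC (Q : I → Set (M × ComplexN n)) : Prop :=
  ∀ i j, IsCompact (closure (D.Qij Q i j)) ∧ closure (D.Qij Q i j) ⊆ D.Oij i j

/-- Condition (d): `Qᵢⱼ ∩ Qᵢₖ ⊆ φᵢⱼ⁻¹(Oⱼₖ)`. -/
def CondD (Q : I → Set (M × ComplexN n)) : Prop :=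
  ∀ i j k, D.Qij Q i j ∩ D.Qij Q i k ⊆ D.φ i j ⁻¹' (D.Oij j k)

/-- Condition (e): `φⱼₖ ∘ φᵢⱼ = φᵢₖ` on `Qᵢⱼ ∩ Qᵢₖ`. -/
def CondE (Q : I → Set (M × ComplexN n)) : Prop :=
  ∀ i j k, ∀ x ∈ D.Qij Q i j ∩ D.Qij Q i k, D.φ j k (D.φ i j x) = D.φ i k x

end GluingData

/-- With the gluing data as in the context, if the open subsets `Qᵢ ⊆ Oᵢ` satisfy conditions
(a), (b), (c), then for each `i, j ∈ I` the image of the map `Qᵢⱼ → Qᵢ × Qⱼ` given by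
`x ↦ (x, φᵢⱼ(x))` is a closed subset of `Qᵢ × Qⱼ` (with its subspace topology). -/
theorem isClosed_graph_in_prod {M : Type*} [TopologicalSpace M] [T2Space M]
    [LocallyCompactSpace M] [FirstCountableTopology M] {n : ℕ} {I : Type*}
    (D : GluingData M n I) (Q : I → Set (M × ComplexN n))
    (hQopen : ∀ i, IsOpen (Q i)) (hQsub : ∀ i, Q i ⊆ D.O i)
    (ha : D.CondA Q) (hb : D.CondB Q) (hc : D.CondC Q) (i j : I) :
    IsClosed (Subtype.val ⁻¹'
        ((fun x => (x, D.φ i j x)) '' D.Qij Q i j) : Set ↥(Q i ×ˢ Q j)) := by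
  set g : M × ComplexN n → (M × ComplexN n) × (M × ComplexN n) := fun x => (x, D.φ i j x)
  have hclo : closure (D.Qij Q i j) ⊆ D.Oij i j := (hc i j).2
  have hN : closure (D.Qij Q i j) ⊆ D.N i j := fun x hx => (hclo hx).1.2
  have hcont : ContinuousOn g (closure (D.Qij Q i j)) :=
    continuousOn_id.prodMk ((D.continuousOn_φ i j).mono hN)
  have hK : IsCompact (g '' closure (D.Qij Q i j)) :=
    (hc i j).1.image_of_continuousOn hcont
  have hC : IsClosed (g '' closure (D.Qij Q i j)) := hK.isClosed
  have key : (Subtype.val ⁻¹' (g '' D.Qij Q i j) : Set ↥(Q i ×ˢ Q j)) =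
      Subtype.val ⁻¹' (g '' closure (D.Qij Q i j)) := by
    apply Set.Subset.antisymm
    · exact fun p hp => Set.image_mono (f := g) subset_closure hp
    · rintro ⟨⟨x, y⟩, hxQ, hyQ⟩ hp
      obtain ⟨x', hx', hxeq⟩ := hp
      have hx1 : x' = x := congrArg Prod.fst hxeq
      subst hx1
      have hy : D.φ i j x' = y := congrArg Prod.snd hxeq
      refine ⟨x', ⟨⟨hxQ, hclo hx'⟩, ?_⟩, hxeq⟩
      simp only [Set.mem_preimage, hy]
      exact hyQ
  rw [key]
  exact hC.preimage continuous_subtype_val
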